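/- Let A, B, X, Y be jointly distributed random variables with finite ranges. If I(X:Y | A) = 0 and H(A | X,Y) = 0, then H(A | B,X) + H(A | B,Y) ≤ H(A | B). -/

import Mathlib

open Finset

noncomputable section

/-- Probability of an event under a distribution on a finite sample space. -/
def pr {Ω : Type*} [Fintype Ω] (p : Ω → ℝ) (E : Set Ω) : ℝ :=
  ∑ ω, E.indicator p ω

/-- `p` is a probability mass function on the finite sample space `Ω`. -/
def IsPMF {Ω : Type*} [Fintype Ω] (p : Ω → ℝ) : Prop :=
  (∀ ω, 0 ≤ p ω) ∧ ∑ ω, p ω = 1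

/-- Shannon entropy (base 2) of a random variable `V` on a finite sample space. -/
def ent {Ω β : Type*} [Fintype Ω] [Fintype β] (p : Ω → ℝ) (V : Ω → β) : ℝ :=
  -∑ v, pr p {ω | V ω = v} * Real.logb 2 (pr p {ω | V ω = v})

/-- Conditional Shannon entropy (base 2): `H(V | W)`. -/
def condEnt {Ω β γ : Type*} [Fintype Ω] [Fintype β] [Fintype γ]
    (p : Ω → ℝ) (V : Ω → β) (W : Ω → γ) : ℝ :=
  ent p (fun ω => (V ω, W ω)) - ent p W

/-- Mutual information (base 2): `I(V : W)`. -/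
def mi {Ω β γ : Type*} [Fintype Ω] [Fintype β] [Fintype γ]
    (p : Ω → ℝ) (V : Ω → β) (W : Ω → γ) : ℝ :=
  ent p V + ent p W - ent p (fun ω => (V ω, W ω))

/-- Conditional mutual information (base 2): `I(V : W | U)`. -/
def cmi {Ω β γ δ : Type*} [Fintype Ω] [Fintype β] [Fintype γ] [Fintype δ]
    (p : Ω → ℝ) (V : Ω → β) (W : Ω → γ) (U : Ω → δ) : ℝ :=
  ent p (fun ω => (V ω, U ω)) + ent p (fun ω => (W ω, U ω))
    - ent p (fun ω => (V ω, W ω, U ω)) - ent p U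

end

section Aux
open scoped Classical
variable {Ω : Type*} [Fintype Ω] {p : Ω → ℝ}

lemma pr_def (p : Ω → ℝ) (E : Set Ω) : pr p E = ∑ ω, if ω ∈ E then p ω else 0 := by
  unfold pr Set.indicator
  congr 1

lemma pr_nonneg (hp : ∀ ω, 0 ≤ p ω) (E : Set Ω) : 0 ≤ pr p E := by
  rw [pr_def]
  refine Finset.sum_nonneg fun ω _ => ?_
  split
  · exact hp ω
  · exact le_rfl

lemma pr_mono (hp : ∀ ω, 0 ≤ p ω) {E F : Set Ω} (h : E ⊆ F) : pr p E ≤ pr p F := by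
  rw [pr_def, pr_def]
  refine Finset.sum_le_sum fun ω _ => ?_
  by_cases hE : ω ∈ E
  · simp [hE, h hE]
  · simp only [hE, if_false]
    split
    · exact hp ω
    · exact le_rfl

lemma le_pr (hp : ∀ ω, 0 ≤ p ω) {E : Set Ω} {ω : Ω} (hω : ω ∈ E) : p ω ≤ pr p E := by
  rw [pr_def]
  have h1 : p ω = if ω ∈ E then p ω else 0 := by simp [hω]
  rw [h1]
  refine Finset.single_le_sum (f := fun ω => if ω ∈ E then p ω else 0) ?_ (Finset.mem_univ ω)
  intro i _
  show 0 ≤ (if i ∈ E then p i else 0)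
  split
  · exact hp i
  · exact le_rfl

lemma pr_pos (hp : ∀ ω, 0 ≤ p ω) {E : Set Ω} {ω : Ω} (hω : ω ∈ E) (h0 : 0 < p ω) :
    0 < pr p E := h0.trans_le (le_pr hp hω)

/-- Key swap lemma: fiber sums equal ω-sums. -/
lemma sum_fiber {β : Type*} [Fintype β] (p : Ω → ℝ) (V : Ω → β) (g : β → ℝ) :
    ∑ v, pr p {ω | V ω = v} * g v = ∑ ω, p ω * g (V ω) := by
  simp only [pr_def, Finset.sum_mul, Set.mem_setOf_eq]
  rw [Finset.sum_comm]
  refine Finset.sum_congr rfl fun ω _ => ?_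
  rw [Finset.sum_eq_single (V ω)]
  · simp
  · intro v _ hv
    simp [Ne.symm hv]  -- if V ω = v fails
  · simp

lemma sum_pr_fiber {β : Type*} [Fintype β] (hp : IsPMF p) (V : Ω → β) :
    ∑ v, pr p {ω | V ω = v} = 1 := by
  have := sum_fiber p V (fun _ => 1)
  simpa [hp.2] using this

lemma ent_eq {β : Type*} [Fintype β] (p : Ω → ℝ) (V : Ω → β) :
    ent p V = -∑ ω, p ω * Real.logb 2 (pr p {ω' | V ω' = V ω}) := by
  unfold ent
  rw [← sum_fiber p V (fun v => Real.logb 2 (pr p {ω | V ω = v}))]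

lemma sum_ite_congr {ι : Type*} [Fintype ι] (f : ι → ℝ) (C D : ι → Prop)
    [DecidablePred C] [DecidablePred D] (h : ∀ i, C i ↔ D i) :
    (∑ i, if C i then f i else 0) = ∑ i, if D i then f i else 0 := by
  refine Finset.sum_congr rfl fun i _ => ?_
  by_cases hc : C i
  · simp [hc, (h i).mp hc]
  · have hd : ¬ D i := fun hd => hc ((h i).mpr hd)
    simp [hc, hd]

lemma pr_congr {E F : Set Ω} (h : ∀ ω, ω ∈ E ↔ ω ∈ F) : pr p E = pr p F := by
  have : E = F := Set.ext h
  rw [this]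

/-- Splitting: probability of `W = w ∧ Q (V ·)` as a sum over values of V. -/
lemma pr_split {β γ : Type*} [Fintype γ] (p : Ω → ℝ) (W : Ω → β) (w : β)
    (V : Ω → γ) (Q : γ → Prop) :
    pr p {ω | W ω = w ∧ Q (V ω)} =
      ∑ v, if Q v then pr p {ω | W ω = w ∧ V ω = v} else 0 := by
  have hstep : ∀ v : γ, (if Q v then pr p {ω | W ω = w ∧ V ω = v} else 0)
      = ∑ ω, if Q v ∧ W ω = w ∧ V ω = v then p ω else 0 := by
    intro v
    by_cases hq : Q v
    · rw [if_pos hq, pr_def]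
      refine Finset.sum_congr rfl fun ω _ => ?_
      by_cases hm : W ω = w ∧ V ω = v
      · rw [if_pos (show ω ∈ {ω | W ω = w ∧ V ω = v} from hm), if_pos ⟨hq, hm.1, hm.2⟩]
      · rw [if_neg (show ω ∉ {ω | W ω = w ∧ V ω = v} from hm), if_neg]
        rintro ⟨-, h1, h2⟩
        exact hm ⟨h1, h2⟩
    · rw [if_neg hq]
      rw [Finset.sum_eq_zero]
      intro ω _
      rw [if_neg]
      rintro ⟨h1, -⟩
      exact hq h1
  refine Eq.trans ?_ (Finset.sum_congr rfl fun v _ => (hstep v).symm)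
  rw [pr_def, Finset.sum_comm]
  refine Finset.sum_congr rfl fun ω _ => ?_
  rw [Finset.sum_eq_single (V ω)]
  · by_cases hq : Q (V ω) <;> by_cases hw : W ω = w <;> simp [hq, hw, Set.mem_setOf_eq]
  · intro v _ hv
    rw [if_neg]
    rintro ⟨-, -, h⟩
    exact hv h.symm
  · intro h
    exact absurd (Finset.mem_univ _) h

lemma pr_margin {β γ : Type*} [Fintype γ] (p : Ω → ℝ) (W : Ω → β) (w : β) (V : Ω → γ) :
    pr p {ω | W ω = w} = ∑ v, pr p {ω | W ω = w ∧ V ω = v} := by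
  have h := pr_split p W w V (fun _ => True)
  have h1 : pr p {ω | W ω = w ∧ True} = pr p {ω | W ω = w} :=
    pr_congr fun ω => by simp
  rw [h1] at h
  rw [h]
  refine Finset.sum_congr rfl fun v _ => ?_
  rw [if_pos trivial]

end Aux


section Main
open scoped Classical
variable {Ω α χ υ : Type*} [Fintype Ω] [Fintype α] [Fintype χ] [Fintype υ]
variable {p : Ω → ℝ} {A : Ω → α} {X : Ω → χ} {Y : Ω → υ}

/-- From `H(A|X,Y) = 0`: a positive-probability triple has full conditional mass. -/
lemma detD1 (hp : IsPMF p) (h2 : condEnt p A (fun ω => (X ω, Y ω)) = 0)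
    {a : α} {x : χ} {y : υ}
    (hpos : 0 < pr p {ω | A ω = a ∧ X ω = x ∧ Y ω = y}) :
    pr p {ω | A ω = a ∧ X ω = x ∧ Y ω = y} = pr p {ω | X ω = x ∧ Y ω = y} := by
  classical
  set paxy : α × χ × υ → ℝ := fun v => pr p {ω | A ω = v.1 ∧ X ω = v.2.1 ∧ Y ω = v.2.2}
    with hpaxy
  set pxy : χ × υ → ℝ := fun v => pr p {ω | X ω = v.1 ∧ Y ω = v.2} with hpxy
  -- rewrite condEnt as a fiber sum
  have e1 : ent p (fun ω => (A ω, (X ω, Y ω)))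
      = -∑ ω, p ω * Real.logb 2 (paxy (A ω, X ω, Y ω)) := by
    rw [ent_eq]
    congr 1
    refine Finset.sum_congr rfl fun ω _ => ?_
    congr 2
    refine pr_congr fun ω' => ?_
    simp [hpaxy, Prod.ext_iff]
  have e2 : ent p (fun ω => (X ω, Y ω))
      = -∑ ω, p ω * Real.logb 2 (pxy (X ω, Y ω)) := by
    rw [ent_eq]
    congr 1
    refine Finset.sum_congr rfl fun ω _ => ?_
    congr 2
    refine pr_congr fun ω' => ?_
    simp [hpxy, Prod.ext_iff]
  have hsum : ∑ ω, p ω * (Real.logb 2 (pxy (X ω, Y ω)) - Real.logb 2 (paxy (A ω, X ω, Y ω))) = 0 := by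
    have := h2
    unfold condEnt at this
    rw [e1, e2] at this
    simp only [mul_sub]
    rw [Finset.sum_sub_distrib]
    linarith [this]
  -- convert to a fiber sum over (a,x,y)
  have hfib : ∑ v : α × χ × υ, paxy v *
      (Real.logb 2 (pxy (v.2.1, v.2.2)) - Real.logb 2 (paxy v)) = 0 := by
    have hs := sum_fiber p (fun ω => (A ω, X ω, Y ω))
      (fun v => Real.logb 2 (pxy (v.2.1, v.2.2)) - Real.logb 2 (paxy v))
    rw [← hsum, ← hs]
    refine Finset.sum_congr rfl fun v _ => ?_
    congr 2
    refine pr_congr fun ω' => ?_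
    simp [hpaxy, Prod.ext_iff]
  -- each term is nonneg
  have hterm : ∀ v : α × χ × υ, 0 ≤ paxy v *
      (Real.logb 2 (pxy (v.2.1, v.2.2)) - Real.logb 2 (paxy v)) := by
    intro v
    have h0' : 0 ≤ paxy v := pr_nonneg hp.1 _
    rcases eq_or_lt_of_le h0' with h0 | h0
    · rw [← h0]; simp
    · refine mul_nonneg h0.le ?_
      have hmono : paxy v ≤ pxy (v.2.1, v.2.2) := by
        refine pr_mono hp.1 fun ω' h => ⟨h.2.1, h.2.2⟩
      have := Real.logb_le_logb_of_le (b := 2) one_lt_two h0 hmono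
      linarith
  have hzero := (Finset.sum_eq_zero_iff_of_nonneg (fun v _ => hterm v)).mp hfib
  have hv := hzero (a, x, y) (Finset.mem_univ _)
  -- conclude equality
  have hle : paxy (a, x, y) ≤ pxy (x, y) := pr_mono hp.1 fun ω' h => ⟨h.2.1, h.2.2⟩
  rcases eq_or_lt_of_le hle with h | h
  · exact h
  · exfalso
    have : Real.logb 2 (paxy (a, x, y)) < Real.logb 2 (pxy (x, y)) :=
      Real.logb_lt_logb one_lt_two hpos h
    have : 0 < paxy (a, x, y) *
        (Real.logb 2 (pxy (x, y)) - Real.logb 2 (paxy (a, x, y))) := by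
      apply mul_pos hpos; linarith
    rw [hv] at this  -- hv : term = 0
    exact lt_irrefl 0 this
end Main

section Main2
open scoped Classical
variable {Ω α χ υ : Type*} [Fintype Ω] [Fintype α] [Fintype χ] [Fintype υ]
variable {p : Ω → ℝ} {A : Ω → α} {X : Ω → χ} {Y : Ω → υ}

/-- From `I(X:Y|A) = 0`: positive marginals force positive joint. -/
lemma detD2 (hp : IsPMF p) (h1 : cmi p X Y A = 0)
    {a : α} {x : χ} {y : υ}
    (hx : 0 < pr p {ω | A ω = a ∧ X ω = x}) (hy : 0 < pr p {ω | A ω = a ∧ Y ω = y}) :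
    0 < pr p {ω | A ω = a ∧ X ω = x ∧ Y ω = y} := by
  classical
  set paxy : α × χ × υ → ℝ := fun v => pr p {ω | A ω = v.1 ∧ X ω = v.2.1 ∧ Y ω = v.2.2}
    with hpaxy
  set pax : α → χ → ℝ := fun a x => pr p {ω | A ω = a ∧ X ω = x} with hpax
  set pay : α → υ → ℝ := fun a y => pr p {ω | A ω = a ∧ Y ω = y} with hpay
  set pa : α → ℝ := fun a => pr p {ω | A ω = a} with hpa
  set L : α × χ × υ → ℝ := fun v =>
    Real.logb 2 (paxy v) + Real.logb 2 (pa v.1)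
      - Real.logb 2 (pax v.1 v.2.1) - Real.logb 2 (pay v.1 v.2.2) with hL
  set m : α × χ × υ → ℝ := fun v => pax v.1 v.2.1 * pay v.1 v.2.2 / pa v.1 with hm
  -- expand cmi as an ω-sum
  have eXA : ent p (fun ω => (X ω, A ω))
      = -∑ ω, p ω * Real.logb 2 (pax (A ω) (X ω)) := by
    rw [ent_eq]
    congr 1
    refine Finset.sum_congr rfl fun ω _ => ?_
    congr 2
    refine pr_congr fun ω' => ?_
    simp only [Set.mem_setOf_eq, Prod.mk.injEq, hpax]
    tauto
  have eYA : ent p (fun ω => (Y ω, A ω))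
      = -∑ ω, p ω * Real.logb 2 (pay (A ω) (Y ω)) := by
    rw [ent_eq]
    congr 1
    refine Finset.sum_congr rfl fun ω _ => ?_
    congr 2
    refine pr_congr fun ω' => ?_
    simp only [Set.mem_setOf_eq, Prod.mk.injEq, hpay]
    tauto
  have eXYA : ent p (fun ω => (X ω, Y ω, A ω))
      = -∑ ω, p ω * Real.logb 2 (paxy (A ω, X ω, Y ω)) := by
    rw [ent_eq]
    congr 1
    refine Finset.sum_congr rfl fun ω _ => ?_
    congr 2
    refine pr_congr fun ω' => ?_
    simp only [Set.mem_setOf_eq, Prod.mk.injEq, hpaxy]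
    tauto
  have eA : ent p A = -∑ ω, p ω * Real.logb 2 (pa (A ω)) := by
    rw [ent_eq]
  have hsum : ∑ ω, p ω * L (A ω, X ω, Y ω) = 0 := by
    have hc := h1
    unfold cmi at hc
    rw [eXA, eYA, eXYA, eA] at hc
    have expand : ∀ ω, p ω * L (A ω, X ω, Y ω)
        = p ω * Real.logb 2 (paxy (A ω, X ω, Y ω)) + p ω * Real.logb 2 (pa (A ω))
          - p ω * Real.logb 2 (pax (A ω) (X ω)) - p ω * Real.logb 2 (pay (A ω) (Y ω)) := by
      intro ω
      simp only [hL]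
      ring
    rw [Finset.sum_congr rfl fun ω _ => expand ω]
    rw [Finset.sum_sub_distrib, Finset.sum_sub_distrib, Finset.sum_add_distrib]
    linarith [hc]
  have hfib : ∑ v : α × χ × υ, paxy v * L v = 0 := by
    have hs := sum_fiber p (fun ω => (A ω, X ω, Y ω)) L
    rw [← hsum, ← hs]
    refine Finset.sum_congr rfl fun v _ => ?_
    congr 1
    refine pr_congr fun ω' => ?_
    simp [hpaxy, Prod.ext_iff]
  -- sum of paxy is 1
  have hsum1 : ∑ v : α × χ × υ, paxy v = 1 := by
    have hs := sum_pr_fiber hp (fun ω => (A ω, X ω, Y ω))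
    rw [← hs]
    refine Finset.sum_congr rfl fun v _ => ?_
    refine (pr_congr fun ω' => ?_).symm
    simp [hpaxy, Prod.ext_iff]
  -- sum of m is 1
  have hmargX : ∀ a, ∑ x, pax a x = pa a := fun a => (pr_margin p A a X).symm
  have hmargY : ∀ a, ∑ y, pay a y = pa a := fun a => (pr_margin p A a Y).symm
  have hsum2 : ∑ v : α × χ × υ, m v = 1 := by
    rw [Fintype.sum_prod_type]
    have per_a : ∀ a, ∑ w : χ × υ, m (a, w) = pa a := by
      intro a
      rw [Fintype.sum_prod_type]
      have : ∀ x : χ, ∑ y, m (a, x, y) = pax a x * pa a / pa a := by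
        intro x
        simp only [hm]
        rw [← Finset.sum_div, ← Finset.mul_sum, hmargY]
      rw [Finset.sum_congr rfl fun x _ => this x]
      rw [← Finset.sum_div, ← Finset.sum_mul, hmargX]
      have h0le : (0:ℝ) ≤ pa a := pr_nonneg hp.1 _
      rcases eq_or_lt_of_le h0le with h0 | h0
      · rw [← h0]; simp
      · field_simp
    rw [Finset.sum_congr rfl fun a _ => per_a a]
    have hs := sum_pr_fiber hp A
    exact hs
  -- pointwise Gibbs bound
  have hterm : ∀ v : α × χ × υ, paxy v - m v ≤ paxy v * L v * Real.log 2 := by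
    intro v
    have h0 : 0 ≤ paxy v := pr_nonneg hp.1 _
    have hmono1 : paxy v ≤ pax v.1 v.2.1 := pr_mono hp.1 fun ω' h => ⟨h.1, h.2.1⟩
    have hmono2 : paxy v ≤ pay v.1 v.2.2 := pr_mono hp.1 fun ω' h => ⟨h.1, h.2.2⟩
    have hmono3 : pax v.1 v.2.1 ≤ pa v.1 := pr_mono hp.1 fun ω' h => h.1
    have hm0 : 0 ≤ m v :=
      div_nonneg (mul_nonneg (pr_nonneg hp.1 _) (pr_nonneg hp.1 _)) (pr_nonneg hp.1 _)
    rcases eq_or_lt_of_le h0 with h0' | h0'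
    · rw [← h0']
      simpa using hm0
    · have hx0 : 0 < pax v.1 v.2.1 := lt_of_lt_of_le h0' hmono1
      have hy0 : 0 < pay v.1 v.2.2 := lt_of_lt_of_le h0' hmono2
      have ha0 : 0 < pa v.1 := lt_of_lt_of_le hx0 hmono3
      set r : ℝ := paxy v * pa v.1 / (pax v.1 v.2.1 * pay v.1 v.2.2) with hr
      have hr0 : 0 < r := div_pos (mul_pos h0' ha0) (mul_pos hx0 hy0)
      have hlog2 : (0:ℝ) < Real.log 2 := Real.log_pos one_lt_two
      have hLv : L v * Real.log 2 = Real.log r := by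
        simp only [hL, hr, Real.logb]
        rw [Real.log_div (by positivity) (by positivity), Real.log_mul (ne_of_gt h0') (ne_of_gt ha0),
          Real.log_mul (ne_of_gt hx0) (ne_of_gt hy0)]
        field_simp
        ring
      rw [mul_assoc, hLv]
      have hbound : 1 - 1/r ≤ Real.log r := by
        have := Real.log_le_sub_one_of_pos (show (0:ℝ) < 1/r by positivity)
        rw [Real.log_div one_ne_zero (ne_of_gt hr0), Real.log_one] at this
        linarith
      have hmr : paxy v * (1/r) = m v := by
        simp only [hr, hm]
        field_simp
      calc paxy v - m v = paxy v * (1 - 1/r) := by rw [mul_sub, mul_one, hmr]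
        _ ≤ paxy v * Real.log r := by
            exact mul_le_mul_of_nonneg_left hbound h0
  -- extract per-term equality
  have hdiff : ∑ v : α × χ × υ, (paxy v * L v * Real.log 2 - (paxy v - m v)) = 0 := by
    rw [Finset.sum_sub_distrib, Finset.sum_sub_distrib, ← Finset.sum_mul, hfib, hsum1, hsum2]
    ring
  have hzero := (Finset.sum_eq_zero_iff_of_nonneg
    (fun v _ => by linarith [hterm v] : ∀ v ∈ Finset.univ,
      0 ≤ paxy v * L v * Real.log 2 - (paxy v - m v))).mp hdiff
  have hv := hzero (a, x, y) (Finset.mem_univ _)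
  -- conclude
  by_contra hcon
  push_neg at hcon
  have h0 : paxy (a, x, y) = 0 :=
    le_antisymm hcon (pr_nonneg hp.1 _)
  have ha0 : 0 < pa a := lt_of_lt_of_le hx (pr_mono hp.1 fun ω' h => h.1)
  have hmpos : 0 < m (a, x, y) := div_pos (mul_pos hx hy) ha0
  rw [h0] at hv
  simp at hv
  rw [hv] at hmpos
  exact lt_irrefl 0 hmpos
end Main2

section Main3
open scoped Classical
variable {Ω α χ υ : Type*} [Fintype Ω] [Fintype α] [Fintype χ] [Fintype υ]
variable {p : Ω → ℝ} {A : Ω → α} {X : Ω → χ} {Y : Ω → υ}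

lemma pr_add_le (hp : ∀ ω, 0 ≤ p ω) {E F G : Set Ω} (hE : E ⊆ G) (hF : F ⊆ G)
    (hd : ∀ ω, ω ∈ E → ω ∉ F) : pr p E + pr p F ≤ pr p G := by
  simp only [pr_def]
  rw [← Finset.sum_add_distrib]
  refine Finset.sum_le_sum fun ω _ => ?_
  by_cases h1 : ω ∈ E
  · rw [if_pos h1, if_neg (hd ω h1), if_pos (hE h1), add_zero]
  · rw [if_neg h1, zero_add]
    by_cases h2 : ω ∈ F
    · rw [if_pos h2, if_pos (hF h2)]
    · rw [if_neg h2]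
      split
      · exact hp _
      · exact le_rfl

/-- Disjointness of the rectangles `S_a × T_a`. -/
lemma rectDisj (hp : IsPMF p) (h1 : cmi p X Y A = 0)
    (h2 : condEnt p A (fun ω => (X ω, Y ω)) = 0)
    {x : χ} {y : υ} {a a' : α}
    (hax : 0 < pr p {ω | A ω = a ∧ X ω = x}) (hay : 0 < pr p {ω | A ω = a ∧ Y ω = y})
    (hax' : 0 < pr p {ω | A ω = a' ∧ X ω = x}) (hay' : 0 < pr p {ω | A ω = a' ∧ Y ω = y}) :
    a = a' := by
  by_contra hne
  have hj := detD2 hp h1 hax hay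
  have hj' := detD2 hp h1 hax' hay'
  have he := detD1 hp h2 hj
  have he' := detD1 hp h2 hj'
  have hsum : pr p {ω | A ω = a ∧ X ω = x ∧ Y ω = y}
      + pr p {ω | A ω = a' ∧ X ω = x ∧ Y ω = y} ≤ pr p {ω | X ω = x ∧ Y ω = y} := by
    refine pr_add_le hp.1 (fun ω h => ⟨h.2.1, h.2.2⟩) (fun ω h => ⟨h.2.1, h.2.2⟩) ?_
    intro ω hω hω'
    exact hne (hω.1.symm.trans hω'.1)
  rw [he, he'] at hsum
  have hpos : 0 < pr p {ω | X ω = x ∧ Y ω = y} := by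
    rw [← he]; exact hj
  linarith

lemma sum_ite_le_single {ι : Type*} [Fintype ι] (P : ι → Prop) [DecidablePred P] {c : ℝ}
    (hc : 0 ≤ c) (huniq : ∀ i j, P i → P j → i = j) :
    ∑ i, (if P i then c else 0) ≤ c := by
  by_cases hex : ∃ i, P i
  · obtain ⟨i0, hi0⟩ := hex
    rw [Finset.sum_eq_single i0]
    · rw [if_pos hi0]
    · intro j _ hj
      rw [if_neg]
      intro hPj
      exact hj (huniq j i0 hPj hi0)
    · intro h
      exact absurd (Finset.mem_univ _) h
  · push_neg at hex
    rw [Finset.sum_eq_zero fun i _ => if_neg (hex i)]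
    exact hc

/-- Generic Gibbs-type bound. -/
lemma gibbs_sum_le (hp : IsPMF p) (l r : Ω → ℝ)
    (hlr : ∀ ω, 0 < p ω → 0 < r ω ∧ l ω = Real.logb 2 (r ω))
    (hmass : ∑ ω, p ω * r ω ≤ 1) : ∑ ω, p ω * l ω ≤ 0 := by
  have hlog2 : (0:ℝ) < Real.log 2 := Real.log_pos one_lt_two
  have hpt : ∀ ω, p ω * l ω ≤ (p ω * r ω - p ω) / Real.log 2 := by
    intro ω
    rcases eq_or_lt_of_le (hp.1 ω) with h0 | h0
    · rw [← h0]; simp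
    · obtain ⟨hr0, hlω⟩ := hlr ω h0
      rw [hlω, Real.logb]
      rw [← mul_div_assoc, div_le_div_iff_of_pos_right hlog2]
      have := Real.log_le_sub_one_of_pos hr0
      calc p ω * Real.log (r ω) ≤ p ω * (r ω - 1) :=
            mul_le_mul_of_nonneg_left this h0.le
        _ = p ω * r ω - p ω := by ring
  calc ∑ ω, p ω * l ω ≤ ∑ ω, (p ω * r ω - p ω) / Real.log 2 :=
        Finset.sum_le_sum fun ω _ => hpt ω
    _ = ((∑ ω, p ω * r ω) - 1) / Real.log 2 := by
        rw [← Finset.sum_div, Finset.sum_sub_distrib, hp.2]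
    _ ≤ 0 := by
        apply div_nonpos_of_nonpos_of_nonneg
        · linarith
        · exact hlog2.le
end Main3


section
open scoped Classical

/-- The [KR11] conditional inequality: if `I(X:Y|A) = 0` and `H(A|X,Y) = 0` then
`H(A|B,X) + H(A|B,Y) ≤ H(A|B)`. -/
theorem stmt_11 {Ω α β χ υ : Type*}
    [Fintype Ω] [Fintype α] [Fintype β] [Fintype χ] [Fintype υ]
    (p : Ω → ℝ) (hp : IsPMF p)
    (A : Ω → α) (B : Ω → β) (X : Ω → χ) (Y : Ω → υ)
    (h1 : cmi p X Y A = 0)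
    (h2 : condEnt p A (fun ω => (X ω, Y ω)) = 0) :
    condEnt p A (fun ω => (B ω, X ω)) + condEnt p A (fun ω => (B ω, Y ω)) ≤
      condEnt p A B := by
  classical
  set qb : β → ℝ := fun b => pr p {ω | B ω = b} with hqb
  set qab : α → β → ℝ := fun a b => pr p {ω | A ω = a ∧ B ω = b} with hqab
  set qbx : β → χ → ℝ := fun b x => pr p {ω | B ω = b ∧ X ω = x} with hqbx
  set qby : β → υ → ℝ := fun b y => pr p {ω | B ω = b ∧ Y ω = y} with hqby
  set qabx : α → β → χ → ℝ := fun a b x => pr p {ω | A ω = a ∧ B ω = b ∧ X ω = x} with hqabx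
  set qaby : α → β → υ → ℝ := fun a b y => pr p {ω | A ω = a ∧ B ω = b ∧ Y ω = y} with hqaby
  set qax : α → χ → ℝ := fun a x => pr p {ω | A ω = a ∧ X ω = x} with hqax
  set qay : α → υ → ℝ := fun a y => pr p {ω | A ω = a ∧ Y ω = y} with hqay
  set gS : α → β → ℝ := fun a b => pr p {ω | B ω = b ∧ 0 < qax a (X ω)} with hgS
  set gT : α → β → ℝ := fun a b => pr p {ω | B ω = b ∧ 0 < qay a (Y ω)} with hgT
  -- entropy expansions
  have eB : ent p B = -∑ ω, p ω * Real.logb 2 (qb (B ω)) := ent_eq p B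
  have eAB : ent p (fun ω => (A ω, B ω)) = -∑ ω, p ω * Real.logb 2 (qab (A ω) (B ω)) := by
    rw [ent_eq]
    congr 1
    refine Finset.sum_congr rfl fun ω _ => ?_
    congr 2
    exact pr_congr fun ω' => by simp [hqab, Prod.ext_iff]
  have eBX : ent p (fun ω => (B ω, X ω)) = -∑ ω, p ω * Real.logb 2 (qbx (B ω) (X ω)) := by
    rw [ent_eq]
    congr 1
    refine Finset.sum_congr rfl fun ω _ => ?_
    congr 2
    exact pr_congr fun ω' => by simp [hqbx, Prod.ext_iff]
  have eBY : ent p (fun ω => (B ω, Y ω)) = -∑ ω, p ω * Real.logb 2 (qby (B ω) (Y ω)) := by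
    rw [ent_eq]
    congr 1
    refine Finset.sum_congr rfl fun ω _ => ?_
    congr 2
    exact pr_congr fun ω' => by simp [hqby, Prod.ext_iff]
  have eABX : ent p (fun ω => (A ω, (B ω, X ω)))
      = -∑ ω, p ω * Real.logb 2 (qabx (A ω) (B ω) (X ω)) := by
    rw [ent_eq]
    congr 1
    refine Finset.sum_congr rfl fun ω _ => ?_
    congr 2
    exact pr_congr fun ω' => by simp [hqabx, Prod.ext_iff]
  have eABY : ent p (fun ω => (A ω, (B ω, Y ω)))
      = -∑ ω, p ω * Real.logb 2 (qaby (A ω) (B ω) (Y ω)) := by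
    rw [ent_eq]
    congr 1
    refine Finset.sum_congr rfl fun ω _ => ?_
    congr 2
    exact pr_congr fun ω' => by simp [hqaby, Prod.ext_iff]
  -- the three Gibbs terms
  set l1 : Ω → ℝ := fun ω => Real.logb 2 (gS (A ω) (B ω)) + Real.logb 2 (gT (A ω) (B ω))
    - Real.logb 2 (qab (A ω) (B ω)) - Real.logb 2 (qb (B ω)) with hl1
  set l2 : Ω → ℝ := fun ω => Real.logb 2 (qab (A ω) (B ω)) + Real.logb 2 (qbx (B ω) (X ω))
    - Real.logb 2 (qabx (A ω) (B ω) (X ω)) - Real.logb 2 (gS (A ω) (B ω)) with hl2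
  set l3 : Ω → ℝ := fun ω => Real.logb 2 (qab (A ω) (B ω)) + Real.logb 2 (qby (B ω) (Y ω))
    - Real.logb 2 (qaby (A ω) (B ω) (Y ω)) - Real.logb 2 (gT (A ω) (B ω)) with hl3
  set r1 : Ω → ℝ := fun ω => gS (A ω) (B ω) * gT (A ω) (B ω)
    / (qab (A ω) (B ω) * qb (B ω)) with hr1
  set r2 : Ω → ℝ := fun ω => qab (A ω) (B ω) * qbx (B ω) (X ω)
    / (qabx (A ω) (B ω) (X ω) * gS (A ω) (B ω)) with hr2
  set r3 : Ω → ℝ := fun ω => qab (A ω) (B ω) * qby (B ω) (Y ω)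
    / (qaby (A ω) (B ω) (Y ω) * gT (A ω) (B ω)) with hr3
  -- pointwise positivity facts
  have hpos : ∀ ω, 0 < p ω →
      0 < qb (B ω) ∧ 0 < qab (A ω) (B ω) ∧ 0 < qbx (B ω) (X ω) ∧ 0 < qby (B ω) (Y ω) ∧
      0 < qabx (A ω) (B ω) (X ω) ∧ 0 < qaby (A ω) (B ω) (Y ω) ∧
      0 < gS (A ω) (B ω) ∧ 0 < gT (A ω) (B ω) := by
    intro ω h0
    have hqaxp : 0 < qax (A ω) (X ω) :=
      pr_pos hp.1 (show ω ∈ {ω' | A ω' = A ω ∧ X ω' = X ω} from ⟨rfl, rfl⟩) h0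
    have hqayp : 0 < qay (A ω) (Y ω) :=
      pr_pos hp.1 (show ω ∈ {ω' | A ω' = A ω ∧ Y ω' = Y ω} from ⟨rfl, rfl⟩) h0
    refine ⟨pr_pos hp.1 (show ω ∈ {ω' | B ω' = B ω} from rfl) h0,
      pr_pos hp.1 (show ω ∈ {ω' | A ω' = A ω ∧ B ω' = B ω} from ⟨rfl, rfl⟩) h0,
      pr_pos hp.1 (show ω ∈ {ω' | B ω' = B ω ∧ X ω' = X ω} from ⟨rfl, rfl⟩) h0,
      pr_pos hp.1 (show ω ∈ {ω' | B ω' = B ω ∧ Y ω' = Y ω} from ⟨rfl, rfl⟩) h0,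
      pr_pos hp.1 (show ω ∈ {ω' | A ω' = A ω ∧ B ω' = B ω ∧ X ω' = X ω} from ⟨rfl, rfl, rfl⟩) h0,
      pr_pos hp.1 (show ω ∈ {ω' | A ω' = A ω ∧ B ω' = B ω ∧ Y ω' = Y ω} from ⟨rfl, rfl, rfl⟩) h0,
      pr_pos hp.1 (show ω ∈ {ω' | B ω' = B ω ∧ 0 < qax (A ω) (X ω')} from ⟨rfl, hqaxp⟩) h0,
      pr_pos hp.1 (show ω ∈ {ω' | B ω' = B ω ∧ 0 < qay (A ω) (Y ω')} from ⟨rfl, hqayp⟩) h0⟩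
  -- mass bounds
  have hqbnn : ∀ b, 0 ≤ qb b := fun b => pr_nonneg hp.1 _
  have hKEY : ∀ b, ∑ a, gS a b * gT a b ≤ qb b * qb b := by
    intro b
    have hgs : ∀ a, gS a b = ∑ x, if 0 < qax a x then qbx b x else 0 := fun a =>
      pr_split p B b X (fun x => 0 < qax a x)
    have hgt : ∀ a, gT a b = ∑ y, if 0 < qay a y then qby b y else 0 := fun a =>
      pr_split p B b Y (fun y => 0 < qay a y)
    have step1 : ∑ a, gS a b * gT a b
        = ∑ a, ∑ x, ∑ y, (if 0 < qax a x ∧ 0 < qay a y then qbx b x * qby b y else 0) := by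
      refine Finset.sum_congr rfl fun a _ => ?_
      rw [hgs a, hgt a, Finset.sum_mul_sum]
      refine Finset.sum_congr rfl fun x _ => Finset.sum_congr rfl fun y _ => ?_
      by_cases h1x : 0 < qax a x <;> by_cases h1y : 0 < qay a y <;> simp [h1x, h1y]
    have step2 : ∑ a, ∑ x, ∑ y, (if 0 < qax a x ∧ 0 < qay a y then qbx b x * qby b y else 0)
        = ∑ x, ∑ y, ∑ a, (if 0 < qax a x ∧ 0 < qay a y then qbx b x * qby b y else 0) := by
      rw [Finset.sum_comm]
      exact Finset.sum_congr rfl fun x _ => Finset.sum_comm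
    have step3 : ∑ x, ∑ y, ∑ a, (if 0 < qax a x ∧ 0 < qay a y then qbx b x * qby b y else 0)
        ≤ ∑ x, ∑ y, qbx b x * qby b y := by
      refine Finset.sum_le_sum fun x _ => Finset.sum_le_sum fun y _ => ?_
      refine sum_ite_le_single _ (mul_nonneg (pr_nonneg hp.1 _) (pr_nonneg hp.1 _)) ?_
      intro a a' ha ha'
      exact rectDisj hp h1 h2 ha.1 ha.2 ha'.1 ha'.2
    have step4 : ∑ x, ∑ y, qbx b x * qby b y = qb b * qb b := by
      rw [← Finset.sum_mul_sum]
      rw [← pr_margin p B b X, ← pr_margin p B b Y]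
    linarith [step1, step2, step3, step4]
  have M1 : ∑ ω, p ω * r1 ω ≤ 1 := by
    have conv : ∑ ω, p ω * r1 ω
        = ∑ v : α × β, pr p {ω | (A ω, B ω) = v}
          * (gS v.1 v.2 * gT v.1 v.2 / (qab v.1 v.2 * qb v.2)) := by
      rw [sum_fiber p (fun ω => (A ω, B ω))
        (fun v => gS v.1 v.2 * gT v.1 v.2 / (qab v.1 v.2 * qb v.2))]
    rw [conv]
    have hpr : ∀ v : α × β, pr p {ω | (A ω, B ω) = v} = qab v.1 v.2 := fun v =>
      pr_congr fun ω' => by simp [hqab, Prod.ext_iff]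
    calc ∑ v : α × β, pr p {ω | (A ω, B ω) = v}
          * (gS v.1 v.2 * gT v.1 v.2 / (qab v.1 v.2 * qb v.2))
        ≤ ∑ v : α × β, gS v.1 v.2 * gT v.1 v.2 / qb v.2 := by
          refine Finset.sum_le_sum fun v _ => ?_
          rw [hpr v]
          have h0 : 0 ≤ qab v.1 v.2 := pr_nonneg hp.1 _
          rcases eq_or_lt_of_le h0 with h0' | h0'
          · rw [← h0', zero_mul]
            exact div_nonneg (mul_nonneg (pr_nonneg hp.1 _) (pr_nonneg hp.1 _)) (hqbnn _)
          · have hqb0 : 0 < qb v.2 :=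
              lt_of_lt_of_le h0' (pr_mono hp.1 fun ω' h => h.2)
            rw [le_div_iff₀ hqb0]
            rw [show qab v.1 v.2 * (gS v.1 v.2 * gT v.1 v.2 / (qab v.1 v.2 * qb v.2)) * qb v.2
                = gS v.1 v.2 * gT v.1 v.2 from by
              field_simp [h0'.ne', hqb0.ne']]
      _ = ∑ b', (∑ a', gS a' b' * gT a' b') / qb b' := by
          rw [Fintype.sum_prod_type, Finset.sum_comm]
          exact Finset.sum_congr rfl fun b' _ => by rw [Finset.sum_div]
      _ ≤ ∑ b', qb b' := by
          refine Finset.sum_le_sum fun b' _ => ?_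
          rcases eq_or_lt_of_le (hqbnn b') with h0' | h0'
          · have hz : ∀ a', gS a' b' * gT a' b' = 0 := by
              intro a'
              have h1' : gS a' b' ≤ qb b' := pr_mono hp.1 fun ω' h => h.1
              have h2' : 0 ≤ gS a' b' := pr_nonneg hp.1 _
              have : gS a' b' = 0 := le_antisymm (h1'.trans_eq h0'.symm) h2'
              rw [this, zero_mul]
            rw [Finset.sum_congr rfl fun a' _ => hz a']
            simp [← h0']
          · rw [div_le_iff₀ h0']
            calc ∑ a', gS a' b' * gT a' b' ≤ qb b' * qb b' := hKEY b'
              _ = qb b' * qb b' := rfl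
      _ = 1 := sum_pr_fiber hp B
  have hprAB : ∀ v : α × β, pr p {ω | (A ω, B ω) = v} = qab v.1 v.2 := fun v =>
    pr_congr fun ω' => by simp [hqab, Prod.ext_iff]
  have sumAB : ∑ a, ∑ b, qab a b = 1 := by
    have hs := sum_pr_fiber hp (fun ω => (A ω, B ω))
    rw [Fintype.sum_prod_type] at hs
    rw [← hs]
    exact Finset.sum_congr rfl fun a _ => Finset.sum_congr rfl fun b _ => (hprAB (a, b)).symm
  have M2 : ∑ ω, p ω * r2 ω ≤ 1 := by
    have conv : ∑ ω, p ω * r2 ω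
        = ∑ v : α × β × χ, pr p {ω | (A ω, B ω, X ω) = v}
          * (qab v.1 v.2.1 * qbx v.2.1 v.2.2 / (qabx v.1 v.2.1 v.2.2 * gS v.1 v.2.1)) := by
      rw [sum_fiber p (fun ω => (A ω, B ω, X ω))
        (fun v => qab v.1 v.2.1 * qbx v.2.1 v.2.2 / (qabx v.1 v.2.1 v.2.2 * gS v.1 v.2.1))]
    rw [conv]
    have hpr : ∀ v : α × β × χ, pr p {ω | (A ω, B ω, X ω) = v} = qabx v.1 v.2.1 v.2.2 :=
      fun v => pr_congr fun ω' => by simp [hqabx, Prod.ext_iff]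
    have hb1 : ∀ v : α × β × χ, pr p {ω | (A ω, B ω, X ω) = v}
        * (qab v.1 v.2.1 * qbx v.2.1 v.2.2 / (qabx v.1 v.2.1 v.2.2 * gS v.1 v.2.1))
        ≤ qab v.1 v.2.1 *
          (if 0 < qabx v.1 v.2.1 v.2.2 then qbx v.2.1 v.2.2 / gS v.1 v.2.1 else 0) := by
      intro v
      rw [hpr v]
      have h0 : 0 ≤ qabx v.1 v.2.1 v.2.2 := pr_nonneg hp.1 _
      rcases eq_or_lt_of_le h0 with h0' | h0'
      · rw [← h0']
        simp
      · have hgax : 0 < qax v.1 v.2.2 :=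
          lt_of_lt_of_le h0' (pr_mono hp.1 fun ω' h => ⟨h.1, h.2.2⟩)
        have hgsp : 0 < gS v.1 v.2.1 := by
          refine lt_of_lt_of_le h0' (pr_mono hp.1 fun ω' h => ⟨h.2.1, ?_⟩)
          rw [h.2.2]
          exact hgax
        rw [if_pos h0']
        rw [show qabx v.1 v.2.1 v.2.2
            * (qab v.1 v.2.1 * qbx v.2.1 v.2.2 / (qabx v.1 v.2.1 v.2.2 * gS v.1 v.2.1))
            = qab v.1 v.2.1 * (qbx v.2.1 v.2.2 / gS v.1 v.2.1) from by
          field_simp [h0'.ne', hgsp.ne']]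
    have hinner : ∀ a b, (∑ x, if 0 < qabx a b x then qbx b x / gS a b else 0) ≤ 1 := by
      intro a b
      by_cases hgs0 : 0 < gS a b
      · have hsplit : ∀ x : χ, (if 0 < qabx a b x then qbx b x / gS a b else 0)
            = (if 0 < qabx a b x then qbx b x else 0) / gS a b := by
          intro x
          split <;> simp
        rw [Finset.sum_congr rfl fun x _ => hsplit x, ← Finset.sum_div]
        rw [div_le_one hgs0]
        have hgs_split : gS a b = ∑ x, if 0 < qax a x then qbx b x else 0 :=
          pr_split p B b X (fun x => 0 < qax a x)
        rw [hgs_split]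
        refine Finset.sum_le_sum fun x _ => ?_
        by_cases hq : 0 < qabx a b x
        · have hq2 : 0 < qax a x := lt_of_lt_of_le hq (pr_mono hp.1 fun ω' h => ⟨h.1, h.2.2⟩)
          rw [if_pos hq, if_pos hq2]
        · rw [if_neg hq]
          split
          · exact pr_nonneg hp.1 _
          · exact le_rfl
      · rw [Finset.sum_eq_zero]
        · exact zero_le_one
        · intro x _
          rw [if_neg]
          intro hq
          have hgax : 0 < qax a x := lt_of_lt_of_le hq (pr_mono hp.1 fun ω' h => ⟨h.1, h.2.2⟩)
          refine hgs0 (lt_of_lt_of_le hq (pr_mono hp.1 fun ω' h => ⟨h.2.1, ?_⟩))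
          rw [h.2.2]
          exact hgax
    calc ∑ v : α × β × χ, pr p {ω | (A ω, B ω, X ω) = v}
          * (qab v.1 v.2.1 * qbx v.2.1 v.2.2 / (qabx v.1 v.2.1 v.2.2 * gS v.1 v.2.1))
        ≤ ∑ v : α × β × χ, qab v.1 v.2.1 *
            (if 0 < qabx v.1 v.2.1 v.2.2 then qbx v.2.1 v.2.2 / gS v.1 v.2.1 else 0) :=
          Finset.sum_le_sum fun v _ => hb1 v
      _ = ∑ a, ∑ b, qab a b * (∑ x, if 0 < qabx a b x then qbx b x / gS a b else 0) := by
          rw [Fintype.sum_prod_type]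
          refine Finset.sum_congr rfl fun a _ => ?_
          rw [Fintype.sum_prod_type]
          refine Finset.sum_congr rfl fun b _ => ?_
          rw [Finset.mul_sum]
      _ ≤ ∑ a, ∑ b, qab a b := by
          refine Finset.sum_le_sum fun a _ => Finset.sum_le_sum fun b _ => ?_
          calc qab a b * (∑ x, if 0 < qabx a b x then qbx b x / gS a b else 0)
              ≤ qab a b * 1 := mul_le_mul_of_nonneg_left (hinner a b) (pr_nonneg hp.1 _)
            _ = qab a b := mul_one _
      _ = 1 := sumAB
  have M3 : ∑ ω, p ω * r3 ω ≤ 1 := by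
    have conv : ∑ ω, p ω * r3 ω
        = ∑ v : α × β × υ, pr p {ω | (A ω, B ω, Y ω) = v}
          * (qab v.1 v.2.1 * qby v.2.1 v.2.2 / (qaby v.1 v.2.1 v.2.2 * gT v.1 v.2.1)) := by
      rw [sum_fiber p (fun ω => (A ω, B ω, Y ω))
        (fun v => qab v.1 v.2.1 * qby v.2.1 v.2.2 / (qaby v.1 v.2.1 v.2.2 * gT v.1 v.2.1))]
    rw [conv]
    have hpr : ∀ v : α × β × υ, pr p {ω | (A ω, B ω, Y ω) = v} = qaby v.1 v.2.1 v.2.2 :=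
      fun v => pr_congr fun ω' => by simp [hqaby, Prod.ext_iff]
    have hb1 : ∀ v : α × β × υ, pr p {ω | (A ω, B ω, Y ω) = v}
        * (qab v.1 v.2.1 * qby v.2.1 v.2.2 / (qaby v.1 v.2.1 v.2.2 * gT v.1 v.2.1))
        ≤ qab v.1 v.2.1 *
          (if 0 < qaby v.1 v.2.1 v.2.2 then qby v.2.1 v.2.2 / gT v.1 v.2.1 else 0) := by
      intro v
      rw [hpr v]
      have h0 : 0 ≤ qaby v.1 v.2.1 v.2.2 := pr_nonneg hp.1 _
      rcases eq_or_lt_of_le h0 with h0' | h0'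
      · rw [← h0']
        simp
      · have hgay : 0 < qay v.1 v.2.2 :=
          lt_of_lt_of_le h0' (pr_mono hp.1 fun ω' h => ⟨h.1, h.2.2⟩)
        have hgtp : 0 < gT v.1 v.2.1 := by
          refine lt_of_lt_of_le h0' (pr_mono hp.1 fun ω' h => ⟨h.2.1, ?_⟩)
          rw [h.2.2]
          exact hgay
        rw [if_pos h0']
        rw [show qaby v.1 v.2.1 v.2.2
            * (qab v.1 v.2.1 * qby v.2.1 v.2.2 / (qaby v.1 v.2.1 v.2.2 * gT v.1 v.2.1))
            = qab v.1 v.2.1 * (qby v.2.1 v.2.2 / gT v.1 v.2.1) from by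
          field_simp [h0'.ne', hgtp.ne']]
    have hinner : ∀ a b, (∑ y, if 0 < qaby a b y then qby b y / gT a b else 0) ≤ 1 := by
      intro a b
      by_cases hgt0 : 0 < gT a b
      · have hsplit : ∀ y : υ, (if 0 < qaby a b y then qby b y / gT a b else 0)
            = (if 0 < qaby a b y then qby b y else 0) / gT a b := by
          intro y
          split <;> simp
        rw [Finset.sum_congr rfl fun y _ => hsplit y, ← Finset.sum_div]
        rw [div_le_one hgt0]
        have hgt_split : gT a b = ∑ y, if 0 < qay a y then qby b y else 0 :=
          pr_split p B b Y (fun y => 0 < qay a y)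
        rw [hgt_split]
        refine Finset.sum_le_sum fun y _ => ?_
        by_cases hq : 0 < qaby a b y
        · have hq2 : 0 < qay a y := lt_of_lt_of_le hq (pr_mono hp.1 fun ω' h => ⟨h.1, h.2.2⟩)
          rw [if_pos hq, if_pos hq2]
        · rw [if_neg hq]
          split
          · exact pr_nonneg hp.1 _
          · exact le_rfl
      · rw [Finset.sum_eq_zero]
        · exact zero_le_one
        · intro y _
          rw [if_neg]
          intro hq
          have hgay : 0 < qay a y := lt_of_lt_of_le hq (pr_mono hp.1 fun ω' h => ⟨h.1, h.2.2⟩)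
          refine hgt0 (lt_of_lt_of_le hq (pr_mono hp.1 fun ω' h => ⟨h.2.1, ?_⟩))
          rw [h.2.2]
          exact hgay
    calc ∑ v : α × β × υ, pr p {ω | (A ω, B ω, Y ω) = v}
          * (qab v.1 v.2.1 * qby v.2.1 v.2.2 / (qaby v.1 v.2.1 v.2.2 * gT v.1 v.2.1))
        ≤ ∑ v : α × β × υ, qab v.1 v.2.1 *
            (if 0 < qaby v.1 v.2.1 v.2.2 then qby v.2.1 v.2.2 / gT v.1 v.2.1 else 0) :=
          Finset.sum_le_sum fun v _ => hb1 v
      _ = ∑ a, ∑ b, qab a b * (∑ y, if 0 < qaby a b y then qby b y / gT a b else 0) := by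
          rw [Fintype.sum_prod_type]
          refine Finset.sum_congr rfl fun a _ => ?_
          rw [Fintype.sum_prod_type]
          refine Finset.sum_congr rfl fun b _ => ?_
          rw [Finset.mul_sum]
      _ ≤ ∑ a, ∑ b, qab a b := by
          refine Finset.sum_le_sum fun a _ => Finset.sum_le_sum fun b _ => ?_
          calc qab a b * (∑ y, if 0 < qaby a b y then qby b y / gT a b else 0)
              ≤ qab a b * 1 := mul_le_mul_of_nonneg_left (hinner a b) (pr_nonneg hp.1 _)
            _ = qab a b := mul_one _
      _ = 1 := sumAB
  -- Gibbs inequalities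
  have hG1 : ∑ ω, p ω * l1 ω ≤ 0 := by
    refine gibbs_sum_le hp l1 r1 (fun ω h0 => ?_) M1
    obtain ⟨hb, hab, hbx, hby, habx, haby, hgs, hgt⟩ := hpos ω h0
    constructor
    · exact div_pos (mul_pos hgs hgt) (mul_pos hab hb)
    · simp only [hl1, hr1]
      rw [Real.logb_div (by positivity) (by positivity),
        Real.logb_mul (ne_of_gt hgs) (ne_of_gt hgt),
        Real.logb_mul (ne_of_gt hab) (ne_of_gt hb)]
      ring
  have hG2 : ∑ ω, p ω * l2 ω ≤ 0 := by
    refine gibbs_sum_le hp l2 r2 (fun ω h0 => ?_) M2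
    obtain ⟨hb, hab, hbx, hby, habx, haby, hgs, hgt⟩ := hpos ω h0
    constructor
    · exact div_pos (mul_pos hab hbx) (mul_pos habx hgs)
    · simp only [hl2, hr2]
      rw [Real.logb_div (by positivity) (by positivity),
        Real.logb_mul (ne_of_gt hab) (ne_of_gt hbx),
        Real.logb_mul (ne_of_gt habx) (ne_of_gt hgs)]
      ring
  have hG3 : ∑ ω, p ω * l3 ω ≤ 0 := by
    refine gibbs_sum_le hp l3 r3 (fun ω h0 => ?_) M3
    obtain ⟨hb, hab, hbx, hby, habx, haby, hgs, hgt⟩ := hpos ω h0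
    constructor
    · exact div_pos (mul_pos hab hby) (mul_pos haby hgt)
    · simp only [hl3, hr3]
      rw [Real.logb_div (by positivity) (by positivity),
        Real.logb_mul (ne_of_gt hab) (ne_of_gt hby),
        Real.logb_mul (ne_of_gt haby) (ne_of_gt hgt)]
      ring
  -- assemble
  have hiden : ∑ ω, p ω * l1 ω + ∑ ω, p ω * l2 ω + ∑ ω, p ω * l3 ω
      = (∑ ω, p ω * Real.logb 2 (qab (A ω) (B ω)))
        + (∑ ω, p ω * Real.logb 2 (qbx (B ω) (X ω)))
        + (∑ ω, p ω * Real.logb 2 (qby (B ω) (Y ω)))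
        - (∑ ω, p ω * Real.logb 2 (qabx (A ω) (B ω) (X ω)))
        - (∑ ω, p ω * Real.logb 2 (qaby (A ω) (B ω) (Y ω)))
        - (∑ ω, p ω * Real.logb 2 (qb (B ω))) := by
    rw [← Finset.sum_add_distrib, ← Finset.sum_add_distrib]
    rw [← Finset.sum_add_distrib, ← Finset.sum_add_distrib, ← Finset.sum_sub_distrib,
      ← Finset.sum_sub_distrib, ← Finset.sum_sub_distrib]
    refine Finset.sum_congr rfl fun ω _ => ?_
    simp only [hl1, hl2, hl3]
    ring
  unfold condEnt
  rw [eB, eAB, eBX, eABX, eBY, eABY]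
  linarith [hG1, hG2, hG3, hiden]

end
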